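/- For every integer N₀ ≥ 1 there exists an integer N ≥ N₀ such that for every k ∈ ℤ³ with 0 < |k|_∞ ≤ N₀ there exist l, m ∈ ℤ³ with N₀ < |l|_∞ ≤ N, N₀ < |m|_∞ ≤ N, |l| ≠ |m|, l and m linearly independent, and k = l + m or k = l − m. -/
import Mathlib

set_option maxHeartbeats 1000000


/-- The sup-norm `|k|_∞ = max_i |k_i|` of a lattice vector. -/
def ninf (k : Fin 3 → ℤ) : ℤ := max |k 0| (max |k 1| |k 2|)

/-- For every `N₀ ≥ 1` there is `N ≥ N₀` such that every low mode `k`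
(`0 < |k|_∞ ≤ N₀`) can be written as `k = l + m` or `k = l − m` with
`l, m` high modes (`N₀ < |l|_∞, |m|_∞ ≤ N`), `|l| ≠ |m|`, and `l, m`
linearly independent. -/
theorem low_modes_from_high_modes (N₀ : ℕ) (hN₀ : 1 ≤ N₀) :
    ∃ N : ℕ, N₀ ≤ N ∧
      ∀ k : Fin 3 → ℤ, 0 < ninf k → ninf k ≤ N₀ →
        ∃ l m : Fin 3 → ℤ,
          (N₀ : ℤ) < ninf l ∧ ninf l ≤ N ∧
          (N₀ : ℤ) < ninf m ∧ ninf m ≤ N ∧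
          (∑ i, (l i) ^ 2) ≠ (∑ i, (m i) ^ 2) ∧
          LinearIndependent ℤ ![l, m] ∧
          (k = l + m ∨ k = l - m) := by
  refine ⟨4 * N₀ ^ 2 + N₀, by nlinarith, ?_⟩
  intro k hk0 hkN
  have hN₀' : (1 : ℤ) ≤ (N₀ : ℤ) := by exact_mod_cast hN₀
  have hNcast : ((4 * N₀ ^ 2 + N₀ : ℕ) : ℤ) = 4 * (N₀ : ℤ) ^ 2 + N₀ := by push_cast; ring
  simp only [ninf, max_le_iff] at hkN
  obtain ⟨hb0, hb1, hb2⟩ := hkN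
  by_cases hA : k 0 = 0 ∧ k 1 = 0
  · -- k = (0, 0, k 2) with k 2 ≠ 0
    have hk2 : k 2 ≠ 0 := by
      intro h
      simp [ninf, hA.1, hA.2, h] at hk0
    have ht0 : (0:ℤ) ≤ 4 * (N₀:ℤ) := by linarith
    have habs_t : |4 * (N₀:ℤ)| = 4 * (N₀:ℤ) := abs_of_nonneg ht0
    refine ⟨![4 * (N₀:ℤ), 0, k 2], ![4 * (N₀:ℤ), 0, 0], ?_, ?_, ?_, ?_, ?_, ?_, ?_⟩
    · simp only [ninf, Matrix.cons_val_zero, lt_max_iff]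
      left; rw [habs_t]; linarith
    · simp only [ninf, Matrix.cons_val_zero, Matrix.cons_val_one, Matrix.head_cons,
        Matrix.cons_val_two, Matrix.tail_cons, max_le_iff, hNcast]
      refine ⟨by rw [habs_t]; nlinarith, by simp; nlinarith, by nlinarith⟩
    · simp only [ninf, Matrix.cons_val_zero, lt_max_iff]
      left; rw [habs_t]; linarith
    · simp only [ninf, Matrix.cons_val_zero, Matrix.cons_val_one, Matrix.head_cons,
        Matrix.cons_val_two, Matrix.tail_cons, max_le_iff, hNcast]
      refine ⟨by rw [habs_t]; nlinarith, by simp; nlinarith, by simp; nlinarith⟩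
    · simp only [Fin.sum_univ_three, Matrix.cons_val_zero, Matrix.cons_val_one,
        Matrix.head_cons, Matrix.cons_val_two, Matrix.tail_cons]
      intro h; nlinarith [pow_two_pos_of_ne_zero hk2]
    · rw [LinearIndependent.pair_iff]
      intro a b hab
      have h2 := congrFun hab 2
      have h0 := congrFun hab 0
      simp only [Pi.add_apply, Pi.smul_apply, Matrix.cons_val_zero, Matrix.cons_val_two,
        Matrix.tail_cons, Matrix.head_cons, Pi.zero_apply, smul_eq_mul] at h2 h0
      have ha : a = 0 := by
        rcases mul_eq_zero.mp (by linarith : a * k 2 = 0) with h | h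
        · exact h
        · exact absurd h hk2
      refine ⟨ha, ?_⟩
      subst ha
      have hb' : b * (4 * (N₀:ℤ)) = 0 := by linarith
      rcases mul_eq_zero.mp hb' with h | h
      · exact h
      · exfalso; linarith
    · right
      funext i
      fin_cases i <;> simp [hA.1, hA.2]
  · -- not both k 0, k 1 zero
    have hpos : 0 < k 0 ^ 2 + k 1 ^ 2 := by
      rcases not_and_or.mp hA with h | h
      · nlinarith [pow_two_pos_of_ne_zero h, sq_nonneg (k 1)]
      · nlinarith [pow_two_pos_of_ne_zero h, sq_nonneg (k 0)]
    have hsq : 1 ≤ |k 0| + |k 1| := by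
      rcases not_and_or.mp hA with h | h
      · have := abs_pos.mpr h; have := abs_nonneg (k 1); omega
      · have := abs_pos.mpr h; have := abs_nonneg (k 0); omega
    have ht0 : (0:ℤ) ≤ 4 * (N₀:ℤ) := by linarith
    have habs0 : |4 * (N₀:ℤ) * k 0| = 4 * (N₀:ℤ) * |k 0| := by
      rw [abs_mul, abs_of_nonneg ht0]
    have habs1 : |4 * (N₀:ℤ) * k 1| = 4 * (N₀:ℤ) * |k 1| := by
      rw [abs_mul, abs_of_nonneg ht0]
    have hm0 : 4 * (N₀:ℤ) * |k 0| ≤ 4 * (N₀:ℤ) * N₀ := by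
      exact mul_le_mul_of_nonneg_left hb0 ht0
    have hm1 : 4 * (N₀:ℤ) * |k 1| ≤ 4 * (N₀:ℤ) * N₀ := by
      exact mul_le_mul_of_nonneg_left hb1 ht0
    refine ⟨![k 0 + 4 * (N₀:ℤ) * k 1, k 1 - 4 * (N₀:ℤ) * k 0, k 2],
      ![4 * (N₀:ℤ) * k 1, -(4 * (N₀:ℤ) * k 0), 0], ?_, ?_, ?_, ?_, ?_, ?_, ?_⟩
    · -- N₀ < ninf l
      have h1 : 4 * (N₀:ℤ) * |k 1| - |k 0| ≤ |k 0 + 4 * (N₀:ℤ) * k 1| := by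
        have := abs_sub_abs_le_abs_sub (4 * (N₀:ℤ) * k 1) (-(k 0))
        simp only [sub_neg_eq_add, abs_neg] at this
        rw [habs1] at this
        calc 4 * (N₀:ℤ) * |k 1| - |k 0| ≤ |4 * (N₀:ℤ) * k 1 + k 0| := this
          _ = |k 0 + 4 * (N₀:ℤ) * k 1| := by rw [add_comm]
      have h2 : 4 * (N₀:ℤ) * |k 0| - |k 1| ≤ |k 1 - 4 * (N₀:ℤ) * k 0| := by
        have := abs_sub_abs_le_abs_sub (4 * (N₀:ℤ) * k 0) (k 1)
        rw [habs0, abs_sub_comm] at this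
        exact this
      simp only [ninf, Matrix.cons_val_zero, Matrix.cons_val_one, Matrix.head_cons,
        Matrix.cons_val_two, Matrix.tail_cons]
      have hl0 : |k 0 + 4 * (N₀:ℤ) * k 1| ≤
          max |k 0 + 4 * (N₀:ℤ) * k 1| (max |k 1 - 4 * (N₀:ℤ) * k 0| |k 2|) :=
        le_max_left _ _
      have hl1 : |k 1 - 4 * (N₀:ℤ) * k 0| ≤
          max |k 0 + 4 * (N₀:ℤ) * k 1| (max |k 1 - 4 * (N₀:ℤ) * k 0| |k 2|) :=
        le_trans (le_max_left _ _) (le_max_right _ _)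
      have hprod : 4 * (N₀:ℤ) - 1 ≤ (4 * (N₀:ℤ) - 1) * (|k 0| + |k 1|) :=
        le_mul_of_one_le_right (by linarith) hsq
      linarith [h1, h2, hl0, hl1, hprod]
    · -- ninf l ≤ N
      simp only [ninf, Matrix.cons_val_zero, Matrix.cons_val_one, Matrix.head_cons,
        Matrix.cons_val_two, Matrix.tail_cons, max_le_iff, hNcast]
      refine ⟨?_, ?_, ?_⟩
      · calc |k 0 + 4 * (N₀:ℤ) * k 1| ≤ |k 0| + |4 * (N₀:ℤ) * k 1| := abs_add_le _ _
          _ ≤ 4 * (N₀:ℤ) ^ 2 + N₀ := by rw [habs1]; nlinarith [hm1]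
      · calc |k 1 - 4 * (N₀:ℤ) * k 0| ≤ |k 1| + |4 * (N₀:ℤ) * k 0| := abs_sub _ _
          _ ≤ 4 * (N₀:ℤ) ^ 2 + N₀ := by rw [habs0]; nlinarith [hm0]
      · nlinarith [abs_nonneg (k 2), sq_nonneg ((N₀:ℤ))]
    · -- N₀ < ninf m
      simp only [ninf, Matrix.cons_val_zero, Matrix.cons_val_one, Matrix.head_cons,
        Matrix.cons_val_two, Matrix.tail_cons, lt_max_iff, abs_neg]
      rcases not_and_or.mp hA with h | h
      · right; left
        have : 1 ≤ |k 0| := abs_pos.mpr h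
        rw [habs0]; nlinarith
      · left
        have : 1 ≤ |k 1| := abs_pos.mpr h
        rw [habs1]; nlinarith
    · -- ninf m ≤ N
      simp only [ninf, Matrix.cons_val_zero, Matrix.cons_val_one, Matrix.head_cons,
        Matrix.cons_val_two, Matrix.tail_cons, max_le_iff, abs_neg, hNcast]
      refine ⟨by rw [habs1]; nlinarith [hm1], by rw [habs0]; nlinarith [hm0], by simp; positivity⟩
    · -- sums of squares differ
      simp only [Fin.sum_univ_three, Matrix.cons_val_zero, Matrix.cons_val_one,
        Matrix.head_cons, Matrix.cons_val_two, Matrix.tail_cons]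
      intro h
      nlinarith [hpos, sq_nonneg (k 2)]
    · -- linear independence
      rw [LinearIndependent.pair_iff]
      intro a b hab
      have hc0 := congrFun hab 0
      have hc1 := congrFun hab 1
      simp only [Pi.add_apply, Pi.smul_apply, Matrix.cons_val_zero, Matrix.cons_val_one,
        Matrix.head_cons, Pi.zero_apply, smul_eq_mul] at hc0 hc1
      have ha' : a * (k 0 ^ 2 + k 1 ^ 2) = 0 := by linear_combination k 0 * hc0 + k 1 * hc1
      have ha : a = 0 := by
        rcases mul_eq_zero.mp ha' with h | h
        · exact h
        · exfalso; linarith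
      refine ⟨ha, ?_⟩
      subst ha
      rcases not_and_or.mp hA with h | h
      · have hb' : b * (4 * (N₀:ℤ)) * k 0 = 0 := by linear_combination -hc1
        rcases mul_eq_zero.mp hb' with h' | h'
        · rcases mul_eq_zero.mp h' with h'' | h''
          · exact h''
          · exfalso; linarith
        · exact absurd h' h
      · have hb' : b * (4 * (N₀:ℤ)) * k 1 = 0 := by linear_combination hc0
        rcases mul_eq_zero.mp hb' with h' | h'
        · rcases mul_eq_zero.mp h' with h'' | h''
          · exact h''
          · exfalso; linarith
        · exact absurd h' h
    · right
      funext i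
      fin_cases i <;> simp
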